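/- Let α ∈ ℝ and let a, b be nonzero complex numbers. The spectrum of the bounded self-adjoint operator H₀ on ℓ²(ℤ;ℂ²) is exactly the set of real numbers t with √(α²+(|a|−|b|)²) ≤ |t| ≤ √(α²+(|a|+|b|)²); that is, σ(H₀) = [−√(α²+(|a|+|b|)²), −√(α²+(|a|−|b|)²)] ∪ [√(α²+(|a|−|b|)²), √(α²+(|a|+|b|)²)], viewed as a subset of ℂ. -/

import Mathlib

open Complex
open scoped InnerProductSpace ENNReal
set_option maxHeartbeats 1000000

local notation "E2" => EuclideanSpace ℂ (Fin 2)
local notation "HS" => lp (fun _ : ℤ => EuclideanSpace ℂ (Fin 2)) 2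

lemma coord_norm_le (x : E2) (i : Fin 2) : ‖x i‖ ≤ ‖x‖ := by
  rw [EuclideanSpace.norm_eq]
  have h1 : ‖x i‖ = Real.sqrt (‖x i‖ ^ 2) := (Real.sqrt_sq (norm_nonneg _)).symm
  rw [h1]
  apply Real.sqrt_le_sqrt
  exact Finset.single_le_sum (f := fun j => ‖x j‖ ^ 2) (fun j _ => by positivity)
    (Finset.mem_univ i)

lemma summable_sq (u : HS) : Summable fun n : ℤ => ‖u n‖ ^ 2 := by
  have h := (lp.memℓp u).summable (p := 2) (by norm_num)
  have e : ∀ x : ℝ, x ^ (2 : ℝ≥0∞).toReal = x ^ (2 : ℕ) := by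
    intro x
    rw [show ((2 : ℝ≥0∞)).toReal = ((2 : ℕ) : ℝ) by norm_num, Real.rpow_natCast]
  simpa [e] using h

lemma summable_sq_coord (u : HS) (i : Fin 2) : Summable fun n : ℤ => ‖u n i‖ ^ 2 := by
  refine Summable.of_nonneg_of_le (fun n => by positivity) (fun n => ?_) (summable_sq u)
  exact pow_le_pow_left₀ (norm_nonneg _) (coord_norm_le (u n) i) 2

lemma summable_sq_shift (u : HS) (i : Fin 2) (k : ℤ) :
    Summable fun n : ℤ => ‖u (n + k) i‖ ^ 2 :=
  ((Equiv.addRight k).summable_iff (f := fun n : ℤ => ‖u n i‖ ^ 2)).2 (summable_sq_coord u i)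

lemma summable_conj_mul (u w : HS) (i j : Fin 2) (k l : ℤ) :
    Summable fun n : ℤ => (starRingEnd ℂ) (u (n + k) i) * w (n + l) j := by
  apply Summable.of_norm
  refine Summable.of_nonneg_of_le (fun n => norm_nonneg _) (fun n => ?_)
    (((summable_sq_shift u i k).add (summable_sq_shift w j l)).div_const 2)
  rw [norm_mul, RCLike.norm_conj]
  nlinarith [norm_nonneg (u (n + k) i), norm_nonneg (w (n + l) j),
    sq_nonneg (‖u (n + k) i‖ - ‖w (n + l) j‖)]

lemma inner_expand (f g : HS) :
    ⟪f, g⟫_ℂ = ∑' n : ℤ, ((starRingEnd ℂ) (f n 0) * g n 0 + (starRingEnd ℂ) (f n 1) * g n 1) := by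
  rw [lp.inner_eq_tsum]
  exact tsum_congr fun n => by
    simp [PiLp.inner_apply, RCLike.inner_apply, Fin.sum_univ_two]
    ring
lemma isSelfAdjoint_H0 (α : ℝ) (a b : ℂ)
    (H₀ : HS →L[ℂ] HS)
    (hH₀ : ∀ (u : HS) (n : ℤ),
      H₀ u n 0 = (α : ℂ) * u n 0 + (starRingEnd ℂ) a * u n 1
          + (starRingEnd ℂ) b * u (n + 1) 1 ∧
      H₀ u n 1 = a * u n 0 + b * u (n - 1) 0 - (α : ℂ) * u n 1) :
    IsSelfAdjoint H₀ := by
  rw [ContinuousLinearMap.isSelfAdjoint_iff_isSymmetric]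
  intro u w
  have conj' : ∀ z : ℂ, (starRingEnd ℂ) ((starRingEnd ℂ) z) = z := fun z => Complex.conj_conj z
  set P : ℤ → ℂ := fun n =>
    (α : ℂ) * ((starRingEnd ℂ) (u n 0) * w n 0) + a * ((starRingEnd ℂ) (u n 1) * w n 0)
      + (starRingEnd ℂ) a * ((starRingEnd ℂ) (u n 0) * w n 1)
      - (α : ℂ) * ((starRingEnd ℂ) (u n 1) * w n 1) with hP_def
  set f3 : ℤ → ℂ := fun n => b * ((starRingEnd ℂ) (u (n + 1) 1) * w n 0) with hf3_def
  set f5 : ℤ → ℂ := fun n => (starRingEnd ℂ) b * ((starRingEnd ℂ) (u (n - 1) 0) * w n 1)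
    with hf5_def
  set g3 : ℤ → ℂ := fun n => b * ((starRingEnd ℂ) (u n 1) * w (n - 1) 0) with hg3_def
  set g5 : ℤ → ℂ := fun n => (starRingEnd ℂ) b * ((starRingEnd ℂ) (u n 0) * w (n + 1) 1)
    with hg5_def
  have h1 := (summable_conj_mul u w 0 0 0 0).mul_left ((α : ℂ))
  have h2 := (summable_conj_mul u w 1 0 0 0).mul_left a
  have h3 := (summable_conj_mul u w 0 1 0 0).mul_left ((starRingEnd ℂ) a)
  have h4 := (summable_conj_mul u w 1 1 0 0).mul_left ((α : ℂ))
  have hP : Summable P := (((h1.add h2).add h3).sub h4).congr fun n => by simp [hP_def]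
  have hf3 : Summable f3 :=
    ((summable_conj_mul u w 1 0 1 0).mul_left b).congr fun n => by simp [hf3_def]
  have hf5 : Summable f5 :=
    ((summable_conj_mul u w 0 1 (-1) 0).mul_left ((starRingEnd ℂ) b)).congr fun n => by
      simp [hf5_def, sub_eq_add_neg]
  have hg3 : Summable g3 :=
    ((summable_conj_mul u w 1 0 0 (-1)).mul_left b).congr fun n => by
      simp [hg3_def, sub_eq_add_neg]
  have hg5 : Summable g5 :=
    ((summable_conj_mul u w 0 1 0 1).mul_left ((starRingEnd ℂ) b)).congr fun n => by
      simp [hg5_def]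
  have e3 : ∑' n, f3 n = ∑' n, g3 n := by
    have := (Equiv.addRight (1 : ℤ)).tsum_eq g3
    rw [← this]
    refine tsum_congr fun n => ?_
    simp [hf3_def, hg3_def, Equiv.coe_addRight, add_sub_cancel_right]
  have e5 : ∑' n, f5 n = ∑' n, g5 n := by
    have := (Equiv.subRight (1 : ℤ)).tsum_eq g5
    rw [← this]
    refine tsum_congr fun n => ?_
    simp [hf5_def, hg5_def, Equiv.subRight_apply, sub_add_cancel]
  calc ⟪H₀ u, w⟫_ℂ = ∑' n, (P n + f3 n + f5 n) := by
        rw [inner_expand]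
        refine tsum_congr fun n => ?_
        rw [(hH₀ u n).1, (hH₀ u n).2]
        simp only [hP_def, hf3_def, hf5_def, map_add, map_mul, map_sub, Complex.conj_ofReal,
          conj']
        ring
    _ = ∑' n, P n + ∑' n, f3 n + ∑' n, f5 n := by
        rw [Summable.tsum_add (hP.add hf3) hf5, Summable.tsum_add hP hf3]
    _ = ∑' n, P n + ∑' n, g3 n + ∑' n, g5 n := by rw [e3, e5]
    _ = ∑' n, (P n + g3 n + g5 n) := by
        rw [Summable.tsum_add (hP.add hg3) hg5, Summable.tsum_add hP hg3]
    _ = ⟪u, H₀ w⟫_ℂ := by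
        rw [inner_expand]
        refine (tsum_congr fun n => ?_).symm
        rw [(hH₀ w n).1, (hH₀ w n).2]
        simp only [hP_def, hg3_def, hg5_def, Complex.conj_ofReal]
        ring

lemma memℓp_shift (u : HS) (k : ℤ) : Memℓp (fun n : ℤ => u (n + k)) 2 := by
  apply memℓp_gen
  have h : Summable fun n : ℤ => ‖u (n + k)‖ ^ (2 : ℕ) :=
    ((Equiv.addRight k).summable_iff (f := fun n : ℤ => ‖u n‖ ^ 2)).2 (summable_sq u)
  refine h.congr fun n => ?_
  rw [show ((2 : ℝ≥0∞)).toReal = ((2 : ℕ) : ℝ) by norm_num, Real.rpow_natCast]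

noncomputable def shiftlp (u : HS) (k : ℤ) : HS := ⟨fun n : ℤ => u (n + k), memℓp_shift u k⟩

@[simp] lemma shiftlp_apply (u : HS) (k n : ℤ) : shiftlp u k n = u (n + k) := rfl

lemma rpow_toReal_two (x : ℝ) : x ^ (2 : ℝ≥0∞).toReal = x ^ (2 : ℕ) := by
  rw [show ((2 : ℝ≥0∞)).toReal = ((2 : ℕ) : ℝ) by norm_num, Real.rpow_natCast]

lemma norm_sq_eq_tsum (u : HS) : ‖u‖ ^ (2 : ℕ) = ∑' n : ℤ, ‖u n‖ ^ (2 : ℕ) := by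
  have h := lp.norm_rpow_eq_tsum (p := 2) (by norm_num) u
  rw [rpow_toReal_two] at h
  rw [h]
  exact tsum_congr fun n => rpow_toReal_two _

lemma norm_shiftlp (u : HS) (k : ℤ) : ‖shiftlp u k‖ = ‖u‖ := by
  have h2 : ‖shiftlp u k‖ ^ (2 : ℕ) = ‖u‖ ^ (2 : ℕ) := by
    rw [norm_sq_eq_tsum, norm_sq_eq_tsum]
    exact (Equiv.addRight k).tsum_eq (fun n : ℤ => ‖u n‖ ^ (2 : ℕ))
  have h3 := congrArg Real.sqrt h2
  simpa [Real.sqrt_sq, norm_nonneg] using h3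

lemma conj_mul_self (z : ℂ) : (starRingEnd ℂ) z * z = ((‖z‖ : ℝ) : ℂ) ^ 2 := by
  rw [← Complex.normSq_eq_conj_mul_self, Complex.normSq_eq_norm_sq]
  push_cast
  ring

lemma H0_sq_apply (α : ℝ) (a b : ℂ) (H₀ : HS →L[ℂ] HS)
    (hH₀ : ∀ (u : HS) (n : ℤ),
      H₀ u n 0 = (α : ℂ) * u n 0 + (starRingEnd ℂ) a * u n 1
          + (starRingEnd ℂ) b * u (n + 1) 1 ∧
      H₀ u n 1 = a * u n 0 + b * u (n - 1) 0 - (α : ℂ) * u n 1) (u : HS) :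
    H₀ (H₀ u) = ((α ^ 2 + ‖a‖ ^ 2 + ‖b‖ ^ 2 : ℝ) : ℂ) • u
      + ((starRingEnd ℂ) a * b) • shiftlp u (-1) + (a * (starRingEnd ℂ) b) • shiftlp u 1 := by
  have haa := conj_mul_self a
  have hbb := conj_mul_self b
  have key0 : ∀ n : ℤ, H₀ (H₀ u) n 0
      = ((α ^ 2 + ‖a‖ ^ 2 + ‖b‖ ^ 2 : ℝ) : ℂ) * u n 0
        + ((starRingEnd ℂ) a * b) * u (n + -1) 0 + (a * (starRingEnd ℂ) b) * u (n + 1) 0 := by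
    intro n
    rw [(hH₀ (H₀ u) n).1, (hH₀ u n).1, (hH₀ u n).2, (hH₀ u (n + 1)).2,
      show (n : ℤ) + 1 - 1 = n by ring, show (n : ℤ) + -1 = n - 1 by ring]
    push_cast
    linear_combination (u n 0 : ℂ) * haa + (u n 0 : ℂ) * hbb
  have key1 : ∀ n : ℤ, H₀ (H₀ u) n 1
      = ((α ^ 2 + ‖a‖ ^ 2 + ‖b‖ ^ 2 : ℝ) : ℂ) * u n 1
        + ((starRingEnd ℂ) a * b) * u (n + -1) 1 + (a * (starRingEnd ℂ) b) * u (n + 1) 1 := by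
    intro n
    rw [(hH₀ (H₀ u) n).2, (hH₀ u n).1, (hH₀ u n).2, (hH₀ u (n - 1)).1,
      show (n : ℤ) - 1 + 1 = n by ring, show (n : ℤ) + -1 = n - 1 by ring]
    push_cast
    linear_combination (u n 1 : ℂ) * haa + (u n 1 : ℂ) * hbb
  apply lp.ext
  funext n
  have hR : ∀ i : Fin 2,
      (((α ^ 2 + ‖a‖ ^ 2 + ‖b‖ ^ 2 : ℝ) : ℂ) • u
        + ((starRingEnd ℂ) a * b) • shiftlp u (-1) + (a * (starRingEnd ℂ) b) • shiftlp u 1) n i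
      = ((α ^ 2 + ‖a‖ ^ 2 + ‖b‖ ^ 2 : ℝ) : ℂ) * u n i
        + ((starRingEnd ℂ) a * b) * u (n + -1) i + (a * (starRingEnd ℂ) b) * u (n + 1) i := by
    intro i
    rfl
  refine PiLp.ext fun i => ?_
  rw [hR i]
  fin_cases i
  · exact key0 n
  · exact key1 n

instance : Nontrivial (lp (fun _ : ℤ => EuclideanSpace ℂ (Fin 2)) 2) := by
  refine ⟨lp.single 2 (0 : ℤ) (EuclideanSpace.single 0 (1 : ℂ)), 0, fun h => ?_⟩
  have h0 := congrArg (fun f : HS => f (0 : ℤ) (0 : Fin 2)) h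
  dsimp only at h0
  rw [lp.single_apply_self] at h0
  simp [EuclideanSpace.single_apply] at h0

lemma K_norm_le (α : ℝ) (a b : ℂ) (H₀ : HS →L[ℂ] HS)
    (hH₀ : ∀ (u : HS) (n : ℤ),
      H₀ u n 0 = (α : ℂ) * u n 0 + (starRingEnd ℂ) a * u n 1
          + (starRingEnd ℂ) b * u (n + 1) 1 ∧
      H₀ u n 1 = a * u n 0 + b * u (n - 1) 0 - (α : ℂ) * u n 1) :
    ‖H₀ ^ 2 - algebraMap ℂ (HS →L[ℂ] HS)
        ((α ^ 2 + ‖a‖ ^ 2 + ‖b‖ ^ 2 : ℝ) : ℂ)‖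
      ≤ 2 * ‖a‖ * ‖b‖ := by
  refine ContinuousLinearMap.opNorm_le_bound _ (by positivity) fun u => ?_
  have happ : (H₀ ^ 2 - algebraMap ℂ (HS →L[ℂ] HS)
      ((α ^ 2 + ‖a‖ ^ 2 + ‖b‖ ^ 2 : ℝ) : ℂ)) u
      = ((starRingEnd ℂ) a * b) • shiftlp u (-1) + (a * (starRingEnd ℂ) b) • shiftlp u 1 := by
    rw [ContinuousLinearMap.sub_apply, sq, ContinuousLinearMap.mul_apply,
      H0_sq_apply α a b H₀ hH₀ u, Algebra.algebraMap_eq_smul_one,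
      ContinuousLinearMap.smul_apply, ContinuousLinearMap.one_apply]
    abel
  rw [happ]
  calc ‖((starRingEnd ℂ) a * b) • shiftlp u (-1) + (a * (starRingEnd ℂ) b) • shiftlp u 1‖
      ≤ ‖((starRingEnd ℂ) a * b) • shiftlp u (-1)‖ + ‖(a * (starRingEnd ℂ) b) • shiftlp u 1‖ :=
        norm_add_le _ _
    _ = ‖a‖ * ‖b‖ * ‖u‖ + ‖a‖ * ‖b‖ * ‖u‖ := by
        rw [norm_smul, norm_smul, norm_shiftlp, norm_shiftlp]
        simp only [norm_mul, Complex.norm_conj]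
    _ = 2 * ‖a‖ * ‖b‖ * ‖u‖ := by ring

lemma spec_subset (α : ℝ) (a b : ℂ) (H₀ : HS →L[ℂ] HS)
    (hH₀ : ∀ (u : HS) (n : ℤ),
      H₀ u n 0 = (α : ℂ) * u n 0 + (starRingEnd ℂ) a * u n 1
          + (starRingEnd ℂ) b * u (n + 1) 1 ∧
      H₀ u n 1 = a * u n 0 + b * u (n - 1) 0 - (α : ℂ) * u n 1) :
    ∀ z ∈ spectrum ℂ H₀, ∃ t : ℝ, z = (t : ℂ) ∧
      Real.sqrt (α ^ 2 + (‖a‖ - ‖b‖) ^ 2) ≤ |t| ∧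
      |t| ≤ Real.sqrt (α ^ 2 + (‖a‖ + ‖b‖) ^ 2) := by
  intro z hz
  have hsa := isSelfAdjoint_H0 α a b H₀ hH₀
  have hre : z = (z.re : ℂ) := hsa.mem_spectrum_eq_re hz
  set t : ℝ := z.re with ht
  have hz2 : (t : ℂ) ^ 2 ∈ spectrum ℂ (H₀ ^ 2) := by
    rw [spectrum.map_pow_of_pos H₀ two_pos]
    exact ⟨z, hz, by rw [hre]⟩
  set c : ℝ := α ^ 2 + ‖a‖ ^ 2 + ‖b‖ ^ 2 with hc
  have hmem : (t : ℂ) ^ 2 - ((c : ℝ) : ℂ) ∈ spectrum ℂ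
      (H₀ ^ 2 - algebraMap ℂ (HS →L[ℂ] HS) ((c : ℝ) : ℂ)) := by
    rw [← spectrum.sub_singleton_eq]
    exact Set.sub_mem_sub hz2 rfl
  have hb1 : ‖(t : ℂ) ^ 2 - ((c : ℝ) : ℂ)‖ ≤ 2 * ‖a‖ * ‖b‖ :=
    (spectrum.norm_le_norm_of_mem hmem).trans (K_norm_le α a b H₀ hH₀)
  have hb2 : |t ^ 2 - c| ≤ 2 * ‖a‖ * ‖b‖ := by
    have he : ((t ^ 2 - c : ℝ) : ℂ) = (t : ℂ) ^ 2 - ((c : ℝ) : ℂ) := by push_cast; ring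
    rw [← he, Complex.norm_real] at hb1
    exact hb1
  rw [abs_le] at hb2
  refine ⟨t, hre, ?_, ?_⟩
  · have h1 : α ^ 2 + (‖a‖ - ‖b‖) ^ 2 ≤ t ^ 2 := by nlinarith [hb2.1]
    calc Real.sqrt (α ^ 2 + (‖a‖ - ‖b‖) ^ 2)
        ≤ Real.sqrt (t ^ 2) := Real.sqrt_le_sqrt h1
      _ = |t| := Real.sqrt_sq_eq_abs t
  · have h2 : t ^ 2 ≤ α ^ 2 + (‖a‖ + ‖b‖) ^ 2 := by nlinarith [hb2.2]
    calc |t| = Real.sqrt (t ^ 2) := (Real.sqrt_sq_eq_abs t).symm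
      _ ≤ Real.sqrt (α ^ 2 + (‖a‖ + ‖b‖) ^ 2) := Real.sqrt_le_sqrt h2

lemma e2_norm_le (x : E2) : ‖x‖ ≤ ‖x 0‖ + ‖x 1‖ := by
  rw [EuclideanSpace.norm_eq, Fin.sum_univ_two]
  have h : Real.sqrt (‖x 0‖ ^ 2 + ‖x 1‖ ^ 2) ≤ Real.sqrt ((‖x 0‖ + ‖x 1‖) ^ 2) := by
    apply Real.sqrt_le_sqrt
    nlinarith [norm_nonneg (x 0), norm_nonneg (x 1)]
  calc Real.sqrt (‖x 0‖ ^ 2 + ‖x 1‖ ^ 2) ≤ Real.sqrt ((‖x 0‖ + ‖x 1‖) ^ 2) := h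
    _ = |‖x 0‖ + ‖x 1‖| := Real.sqrt_sq_eq_abs _
    _ = ‖x 0‖ + ‖x 1‖ := abs_of_nonneg (by positivity)

lemma exists_circle_abs (a b : ℂ) (ha : a ≠ 0) (hb : b ≠ 0) {r : ℝ}
    (h1 : |‖a‖ - ‖b‖| ≤ r) (h2 : r ≤ ‖a‖ + ‖b‖) :
    ∃ ζ : ℂ, ‖ζ‖ = 1 ∧ ‖a + b * ζ‖ = r := by
  have hA : (0 : ℝ) < ‖a‖ := norm_pos_iff.mpr ha
  have hB : (0 : ℝ) < ‖b‖ := norm_pos_iff.mpr hb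
  set q : ℝ := ‖b‖ / ‖a‖ with hq
  have hq0 : 0 ≤ q := by positivity
  have haq : ‖a‖ * q = ‖b‖ := by
    rw [hq]; field_simp
  set z₀ : ℂ := a * (starRingEnd ℂ) b / ((‖a‖ * ‖b‖ : ℝ) : ℂ) with hz₀
  have hz₀abs : ‖z₀‖ = 1 := by
    rw [hz₀, norm_div, norm_mul, Complex.norm_conj, Complex.norm_real, Real.norm_eq_abs,
      abs_of_pos (by positivity)]
    field_simp
  have hbz₀ : b * z₀ = a * ((q : ℝ) : ℂ) := by
    rw [hz₀, hq]
    have hcb : b * (starRingEnd ℂ) b = (((‖b‖ : ℝ) : ℂ)) ^ 2 := by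
      rw [mul_comm]; exact conj_mul_self b
    have hA' : ((‖a‖ : ℝ) : ℂ) ≠ 0 := by simp [ne_of_gt hA]
    have hB' : ((‖b‖ : ℝ) : ℂ) ≠ 0 := by simp [ne_of_gt hB]
    push_cast
    field_simp
    linear_combination hcb
  set f : ℝ → ℝ := fun s =>
    ‖a + b * (z₀ * Complex.exp ((s * Real.pi : ℝ) * Complex.I))‖ with hf
  have hcont : Continuous f := by
    apply continuous_norm.comp
    fun_prop
  have hf0 : f 0 = ‖a‖ + ‖b‖ := by
    simp only [hf]
    simp only [zero_mul, Complex.ofReal_zero, Complex.exp_zero, mul_one]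
    rw [hbz₀, ← mul_one_add, norm_mul]
    rw [show ((1:ℂ) + (q:ℂ)) = ((1 + q : ℝ) : ℂ) by push_cast; ring, Complex.norm_real, Real.norm_eq_abs]
    rw [_root_.abs_of_nonneg (by linarith : (0:ℝ) ≤ 1 + q)]
    rw [mul_add, mul_one, haq]
  have hf1 : f 1 = |‖a‖ - ‖b‖| := by
    simp only [hf]
    have hexp : Complex.exp ((1 * Real.pi : ℝ) * Complex.I) = -1 := by
      rw [one_mul]; exact Complex.exp_pi_mul_I
    rw [hexp, mul_neg_one, mul_neg, ← sub_eq_add_neg, hbz₀, ← mul_one_sub, norm_mul]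
    rw [show ((1:ℂ) - (q:ℂ)) = ((1 - q : ℝ) : ℂ) by push_cast; ring, Complex.norm_real, Real.norm_eq_abs]
    rw [← abs_of_pos hA, ← abs_mul, mul_sub, mul_one, abs_of_pos hA, haq]
  have hsub := intermediate_value_Icc' (by norm_num : (0:ℝ) ≤ 1) hcont.continuousOn
  have hrmem : r ∈ Set.Icc (f 1) (f 0) := by
    constructor
    · rw [hf1]; exact h1
    · rw [hf0]; exact h2
  obtain ⟨s, _, hs⟩ := hsub hrmem
  exact ⟨z₀ * Complex.exp ((s * Real.pi : ℝ) * Complex.I), by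
    rw [norm_mul, hz₀abs, Complex.norm_exp_ofReal_mul_I, one_mul], hs⟩

lemma weyl_mem (α : ℝ) (a b : ℂ) (ha : a ≠ 0) (hb : b ≠ 0) (H₀ : HS →L[ℂ] HS)
    (hH₀ : ∀ (u : HS) (n : ℤ),
      H₀ u n 0 = (α : ℂ) * u n 0 + (starRingEnd ℂ) a * u n 1
          + (starRingEnd ℂ) b * u (n + 1) 1 ∧
      H₀ u n 1 = a * u n 0 + b * u (n - 1) 0 - (α : ℂ) * u n 1) (t : ℝ)
    (hm : Real.sqrt (α ^ 2 + (‖a‖ - ‖b‖) ^ 2) ≤ |t|)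
    (hM : |t| ≤ Real.sqrt (α ^ 2 + (‖a‖ + ‖b‖) ^ 2)) :
    (t : ℂ) ∈ spectrum ℂ H₀ := by
  by_contra hns
  rw [spectrum.mem_iff, not_not] at hns
  obtain ⟨U, hU⟩ := hns
  -- band data
  have hm2 : α ^ 2 + (‖a‖ - ‖b‖) ^ 2 ≤ t ^ 2 := by
    have h := Real.sq_sqrt (by positivity : (0:ℝ) ≤ α ^ 2 + (‖a‖ - ‖b‖) ^ 2)
    nlinarith [Real.sqrt_nonneg (α ^ 2 + (‖a‖ - ‖b‖) ^ 2), abs_nonneg t,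
      _root_.sq_abs t]
  have hM2 : t ^ 2 ≤ α ^ 2 + (‖a‖ + ‖b‖) ^ 2 := by
    have h := Real.sq_sqrt (by positivity : (0:ℝ) ≤ α ^ 2 + (‖a‖ + ‖b‖) ^ 2)
    nlinarith [abs_nonneg t, _root_.sq_abs t, Real.sqrt_nonneg (α ^ 2 + (‖a‖ + ‖b‖) ^ 2)]
  have htα : α ^ 2 ≤ t ^ 2 := le_trans (by nlinarith [sq_nonneg (‖a‖ - ‖b‖)]) hm2
  set r : ℝ := Real.sqrt (t ^ 2 - α ^ 2) with hr
  have hr2 : r ^ 2 = t ^ 2 - α ^ 2 := Real.sq_sqrt (by linarith)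
  have hrlb : |‖a‖ - ‖b‖| ≤ r := by
    rw [← Real.sqrt_sq_eq_abs]
    exact Real.sqrt_le_sqrt (by linarith)
  have hrub : r ≤ ‖a‖ + ‖b‖ := by
    rw [show ‖a‖ + ‖b‖
        = Real.sqrt ((‖a‖ + ‖b‖) ^ 2) by
      rw [Real.sqrt_sq (by positivity)]]
    exact Real.sqrt_le_sqrt (by linarith)
  obtain ⟨ζ, hζ1, hζr⟩ := exists_circle_abs a b ha hb hrlb hrub
  set c : ℂ := a + b * ζ with hc
  set ξ : ℂ := (starRingEnd ℂ) ζ with hξ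
  have hζ0 : ζ ≠ 0 := fun h => by simp [h] at hζ1
  have hξ0 : ξ ≠ 0 := fun h => hζ0 (by simpa [hξ] using congrArg (starRingEnd ℂ) h)
  have hξζ : ξ * ζ = 1 := by
    rw [hξ, ← Complex.normSq_eq_conj_mul_self, Complex.normSq_eq_norm_sq, hζ1]
    norm_num
  have hξinv : ξ⁻¹ = ζ := inv_eq_of_mul_eq_one_right hξζ
  have hcc : (starRingEnd ℂ) c * c = ((t : ℝ) : ℂ) ^ 2 - ((α : ℝ) : ℂ) ^ 2 := by
    rw [conj_mul_self c, show ‖c‖ = r by rw [hc]; exact hζr]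
    rw [show (((r:ℝ):ℂ))^2 = (((r^2 : ℝ)):ℂ) by push_cast; ring, hr2]
    push_cast
    ring
  have hconjc : (starRingEnd ℂ) c = (starRingEnd ℂ) a + (starRingEnd ℂ) b * ξ := by
    rw [hc, hξ]
    simp [map_add, map_mul]
  obtain ⟨v, hvne, hev1, hev2⟩ : ∃ v : E2, v ≠ 0 ∧
      (α : ℂ) * v 0 + (starRingEnd ℂ) c * v 1 = (t : ℂ) * v 0 ∧
      c * v 0 - (α : ℂ) * v 1 = (t : ℂ) * v 1 := by
    by_cases hca : c = 0 ∧ (t : ℂ) = ((α : ℝ) : ℂ)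
    · refine ⟨(WithLp.equiv 2 (Fin 2 → ℂ)).symm ![1, 0], ?_, ?_, ?_⟩
      · intro h
        have h0 := congrFun (congrArg (WithLp.equiv 2 (Fin 2 → ℂ)) h) 0
        simp [Matrix.cons_val_zero] at h0
      · show (α : ℂ) * (![1, 0] 0) + (starRingEnd ℂ) c * (![1, 0] 1) = (t : ℂ) * (![1, 0] 0)
        simp [hca.1, hca.2.symm]
      · show c * (![1, 0] 0) - (α : ℂ) * (![1, 0] 1) = (t : ℂ) * (![1, 0] 1)
        simp [hca.1]
    · refine ⟨(WithLp.equiv 2 (Fin 2 → ℂ)).symm ![(starRingEnd ℂ) c, (t : ℂ) - (α : ℝ)],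
        ?_, ?_, ?_⟩
      · intro h
        refine hca ⟨?_, ?_⟩
        · have h0 := congrFun (congrArg (WithLp.equiv 2 (Fin 2 → ℂ)) h) 0
          simp at h0
          have : (starRingEnd ℂ) c = 0 := by simpa using h0
          simpa using congrArg (starRingEnd ℂ) this
        · have h1 := congrFun (congrArg (WithLp.equiv 2 (Fin 2 → ℂ)) h) 1
          simp at h1
          have : (t : ℂ) - ((α : ℝ) : ℂ) = 0 := by simpa using h1
          linear_combination this
      · show (α : ℂ) * (![(starRingEnd ℂ) c, (t : ℂ) - (α : ℝ)] 0)
            + (starRingEnd ℂ) c * (![(starRingEnd ℂ) c, (t : ℂ) - (α : ℝ)] 1)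
            = (t : ℂ) * (![(starRingEnd ℂ) c, (t : ℂ) - (α : ℝ)] 0)
        simp only [Matrix.cons_val_zero, Matrix.cons_val_one, Matrix.head_cons]
        ring
      · show c * (![(starRingEnd ℂ) c, (t : ℂ) - (α : ℝ)] 0)
            - (α : ℂ) * (![(starRingEnd ℂ) c, (t : ℂ) - (α : ℝ)] 1)
            = (t : ℂ) * (![(starRingEnd ℂ) c, (t : ℂ) - (α : ℝ)] 1)
        simp only [Matrix.cons_val_zero, Matrix.cons_val_one, Matrix.head_cons]
        linear_combination hcc
  have hv0 : (0:ℝ) < ‖v‖ := norm_pos_iff.mpr hvne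
  -- eigen-relations in convenient form
  have hrel0 : (α : ℂ) * v 0 + (starRingEnd ℂ) a * v 1 - (t : ℂ) * v 0
      = -((starRingEnd ℂ) b * ξ * v 1) := by
    rw [hconjc] at hev1
    linear_combination hev1
  have hrel1 : a * v 0 - (α : ℂ) * v 1 - (t : ℂ) * v 1 = -(b * ζ * v 0) := by
    rw [hc] at hev2
    linear_combination hev2
  -- choose N
  set D : ℝ := ‖(↑U⁻¹ : HS →L[ℂ] HS)‖ * (4 * ‖b‖ * ‖v‖) with hD
  obtain ⟨N, hN⟩ := exists_nat_gt (D ^ 2 / ‖v‖ ^ 2)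
  -- the truncated Weyl vector
  set χ : ℤ → ℂ := fun n => if -(N:ℤ) ≤ n ∧ n ≤ (N:ℤ) then 1 else 0 with hχ
  set fv : ℤ → E2 := fun n =>
    if -(N:ℤ) ≤ n ∧ n ≤ (N:ℤ) then (ξ ^ n) • v else 0 with hfv
  have hmemf : Memℓp fv 2 := by
    apply memℓp_gen
    apply summable_of_ne_finset_zero (s := Finset.Icc (-(N:ℤ)) (N:ℤ))
    intro n hn
    rw [Finset.mem_Icc] at hn
    have : fv n = 0 := by simp only [hfv]; rw [if_neg (by omega)]
    rw [this]
    simp [Real.zero_rpow (by norm_num : (2:ℝ≥0∞).toReal ≠ 0)]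
  set uN : HS := ⟨fv, hmemf⟩ with huN
  have happ : ∀ (n : ℤ) (i : Fin 2), uN n i = χ n * (ξ ^ n * v i) := by
    intro n i
    show fv n i = _
    by_cases h : -(N:ℤ) ≤ n ∧ n ≤ (N:ℤ)
    · simp only [hfv, hχ, if_pos h]
      simp [PiLp.smul_apply, smul_eq_mul]
    · simp only [hfv, hχ, if_neg h]
      simp
  set g : HS := H₀ uN - (t : ℂ) • uN with hg
  have hgapp : ∀ (n : ℤ) (i : Fin 2), g n i = H₀ uN n i - (t:ℂ) * uN n i := by
    intro n i
    simp only [hg, lp.coeFn_sub, Pi.sub_apply, lp.coeFn_smul, Pi.smul_apply]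
    simp [PiLp.sub_apply, PiLp.smul_apply, smul_eq_mul]
  have hg0 : ∀ n : ℤ, g n 0 = (χ (n+1) - χ n) * ((starRingEnd ℂ) b * (ξ ^ (n+1) * v 1)) := by
    intro n
    rw [hgapp n 0, (hH₀ uN n).1, happ n 0, happ n 1, happ (n+1) 1, zpow_add_one₀ hξ0]
    linear_combination (χ n * ξ ^ n) * hrel0
  have hg1 : ∀ n : ℤ, g n 1 = (χ (n-1) - χ n) * (b * (ξ ^ (n-1) * v 0)) := by
    intro n
    rw [hgapp n 1, (hH₀ uN n).2, happ n 0, happ n 1, happ (n-1) 0, zpow_sub_one₀ hξ0, hξinv]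
    linear_combination (χ n * ξ ^ n) * hrel1
  -- support and bounds for g
  set S : Finset ℤ := {-(N:ℤ)-1, -(N:ℤ), (N:ℤ), (N:ℤ)+1} with hS
  have hsupp : ∀ n : ℤ, n ∉ S → g n = 0 := by
    intro n hn
    simp only [hS, Finset.mem_insert, Finset.mem_singleton] at hn
    push_neg at hn
    obtain ⟨h1, h2, h3, h4⟩ := hn
    have e1 : χ (n+1) = χ n := by
      simp only [hχ]
      split_ifs with p q <;> first | rfl | omega
    have e2 : χ (n-1) = χ n := by
      simp only [hχ]
      split_ifs with p q <;> first | rfl | omega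
    have hz0 : g n 0 = 0 := by rw [hg0 n, e1]; ring
    have hz1 : g n 1 = 0 := by rw [hg1 n, e2]; ring
    refine PiLp.ext fun i => ?_
    fin_cases i
    · exact hz0
    · exact hz1
  have hξ1 : ‖ξ‖ = 1 := by rw [hξ, Complex.norm_conj, hζ1]
  have habsξ : ∀ k : ℤ, ‖ξ ^ k‖ = 1 := fun k => by
    rw [norm_zpow, hξ1, one_zpow]
  have hχbound : ∀ m n : ℤ, ‖χ m - χ n‖ ≤ 1 := by
    intro m n
    simp only [hχ]
    split_ifs <;> norm_num
  have hgn_le : ∀ n : ℤ, ‖g n‖ ≤ 2 * ‖b‖ * ‖v‖ := by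
    intro n
    refine (e2_norm_le (g n)).trans ?_
    have b0 : ‖g n 0‖ ≤ ‖b‖ * ‖v‖ := by
      rw [hg0 n, norm_mul, norm_mul, norm_mul, Complex.norm_conj, habsξ]
      have c1 := hχbound (n+1) n
      have c2 := coord_norm_le v 1
      have c3 := norm_nonneg (χ (n+1) - χ n)
      have c4 := norm_nonneg b
      have c5 := norm_nonneg (v 1)
      rw [one_mul]
      have hmm : ‖χ (n+1) - χ n‖ * (‖b‖ * ‖v 1‖)
          ≤ 1 * (‖b‖ * ‖v‖) :=
        mul_le_mul c1 (mul_le_mul_of_nonneg_left c2 c4) (by positivity) zero_le_one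
      linarith
    have b1 : ‖g n 1‖ ≤ ‖b‖ * ‖v‖ := by
      rw [hg1 n, norm_mul, norm_mul, norm_mul, habsξ]
      have c1 := hχbound (n-1) n
      have c2 := coord_norm_le v 0
      have c3 := norm_nonneg (χ (n-1) - χ n)
      have c4 := norm_nonneg b
      have c5 := norm_nonneg (v 0)
      rw [one_mul]
      have hmm : ‖χ (n-1) - χ n‖ * (‖b‖ * ‖v 0‖)
          ≤ 1 * (‖b‖ * ‖v‖) :=
        mul_le_mul c1 (mul_le_mul_of_nonneg_left c2 c4) (by positivity) zero_le_one
      linarith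
    linarith
  have hgnorm : ‖g‖ ≤ 4 * ‖b‖ * ‖v‖ := by
    have hcard : (S.card : ℝ) ≤ 4 := by
      have h1 : S.card ≤ ({-(N:ℤ), (N:ℤ), (N:ℤ)+1} : Finset ℤ).card + 1 :=
        Finset.card_insert_le _ _
      have h2 : ({-(N:ℤ), (N:ℤ), (N:ℤ)+1} : Finset ℤ).card
          ≤ ({(N:ℤ), (N:ℤ)+1} : Finset ℤ).card + 1 := Finset.card_insert_le _ _
      have h3 : ({(N:ℤ), (N:ℤ)+1} : Finset ℤ).card
          ≤ ({(N:ℤ)+1} : Finset ℤ).card + 1 := Finset.card_insert_le _ _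
      have h4 : ({(N:ℤ)+1} : Finset ℤ).card = 1 := Finset.card_singleton _
      have : S.card ≤ 4 := by omega
      exact_mod_cast this
    have hsq : ‖g‖ ^ (2:ℕ) ≤ (4 * ‖b‖ * ‖v‖) ^ 2 := by
      rw [norm_sq_eq_tsum g, tsum_eq_sum (s := S)
        (fun n hn => by rw [hsupp n hn]; simp)]
      have hle : ∑ n ∈ S, ‖g n‖ ^ (2:ℕ)
          ≤ ∑ _n ∈ S, (2 * ‖b‖ * ‖v‖) ^ 2 :=
        Finset.sum_le_sum fun n _ => pow_le_pow_left₀ (norm_nonneg _) (hgn_le n) 2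
      refine hle.trans ?_
      rw [Finset.sum_const, nsmul_eq_mul]
      have hq : (0:ℝ) ≤ (2 * ‖b‖ * ‖v‖) ^ 2 := by positivity
      nlinarith [hq, hcard, Nat.cast_nonneg (α := ℝ) S.card]
    calc ‖g‖ = Real.sqrt (‖g‖ ^ 2) := (Real.sqrt_sq (norm_nonneg g)).symm
      _ ≤ Real.sqrt ((4 * ‖b‖ * ‖v‖) ^ 2) := Real.sqrt_le_sqrt hsq
      _ = 4 * ‖b‖ * ‖v‖ := Real.sqrt_sq (by positivity)
  have hlowb : (2 * (N:ℝ) + 1) * ‖v‖ ^ 2 ≤ ‖uN‖ ^ 2 := by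
    have hsum := lp.sum_rpow_le_norm_rpow (p := 2) (by norm_num) uN
      (Finset.Icc (-(N:ℤ)) (N:ℤ))
    simp only [rpow_toReal_two] at hsum
    have hterm : ∀ n ∈ Finset.Icc (-(N:ℤ)) (N:ℤ), ‖uN n‖ ^ (2:ℕ) = ‖v‖ ^ 2 := by
      intro n hn
      rw [Finset.mem_Icc] at hn
      have : uN n = (ξ ^ n) • v := by
        show fv n = _
        simp only [hfv]
        rw [if_pos ⟨hn.1, hn.2⟩]
      rw [this, norm_smul, habsξ, one_mul]
    rw [Finset.sum_congr rfl hterm, Finset.sum_const, nsmul_eq_mul, Int.card_Icc] at hsum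
    have hc2 : (((N:ℤ) + 1 - -(N:ℤ)).toNat : ℝ) = 2 * (N:ℝ) + 1 := by
      have : ((N:ℤ) + 1 - -(N:ℤ)).toNat = 2 * N + 1 := by omega
      rw [this]
      push_cast
      ring
    rw [hc2] at hsum
    exact hsum
  have happU : (↑U : HS →L[ℂ] HS) uN = -g := by
    rw [hU]
    rw [ContinuousLinearMap.sub_apply, Algebra.algebraMap_eq_smul_one,
      ContinuousLinearMap.smul_apply, ContinuousLinearMap.one_apply, hg]
    abel
  have hun_eq : uN = (↑U⁻¹ : HS →L[ℂ] HS) (-g) := by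
    rw [← happU, ← ContinuousLinearMap.mul_apply, U.inv_mul, ContinuousLinearMap.one_apply]
  have hunorm : ‖uN‖ ≤ D := by
    rw [hun_eq]
    calc ‖(↑U⁻¹ : HS →L[ℂ] HS) (-g)‖ ≤ ‖(↑U⁻¹ : HS →L[ℂ] HS)‖ * ‖-g‖ :=
        ContinuousLinearMap.le_opNorm _ _
      _ = ‖(↑U⁻¹ : HS →L[ℂ] HS)‖ * ‖g‖ := by rw [norm_neg]
      _ ≤ D := by
          rw [hD]
          exact mul_le_mul_of_nonneg_left hgnorm (norm_nonneg _)
  have hfin1 : (2 * (N:ℝ) + 1) * ‖v‖ ^ 2 ≤ D ^ 2 :=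
    hlowb.trans (pow_le_pow_left₀ (norm_nonneg _) hunorm 2)
  have hfin2 : D ^ 2 < (N:ℝ) * ‖v‖ ^ 2 := by
    rw [div_lt_iff₀ (by positivity)] at hN
    linarith
  nlinarith [hv0, Nat.cast_nonneg (α := ℝ) N, sq_nonneg ‖v‖]

/-- The spectrum of the free first-order finite difference operator
`H₀` on `ℓ²(ℤ; ℂ²)` is the union of the two spectral bands
`[−√(α²+(|a|+|b|)²), −√(α²+(|a|−|b|)²)] ∪ [√(α²+(|a|−|b|)²), √(α²+(|a|+|b|)²)]`,
viewed as a subset of `ℂ`. -/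
theorem spectrum_H0_eq_bands (α : ℝ) (a b : ℂ) (ha : a ≠ 0) (hb : b ≠ 0)
    (H₀ : lp (fun _ : ℤ => EuclideanSpace ℂ (Fin 2)) 2 →L[ℂ]
          lp (fun _ : ℤ => EuclideanSpace ℂ (Fin 2)) 2)
    (hH₀ : ∀ (u : lp (fun _ : ℤ => EuclideanSpace ℂ (Fin 2)) 2) (n : ℤ),
      H₀ u n 0 = (α : ℂ) * u n 0 + (starRingEnd ℂ) a * u n 1
          + (starRingEnd ℂ) b * u (n + 1) 1 ∧
      H₀ u n 1 = a * u n 0 + b * u (n - 1) 0 - (α : ℂ) * u n 1) :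
    spectrum ℂ H₀ =
      (fun t : ℝ => (t : ℂ)) ''
        {t : ℝ | Real.sqrt (α ^ 2 + (‖a‖ - ‖b‖) ^ 2) ≤ |t| ∧
          |t| ≤ Real.sqrt (α ^ 2 + (‖a‖ + ‖b‖) ^ 2)} := by
  ext z
  constructor
  · intro hz
    obtain ⟨t, hzt, h1, h2⟩ := spec_subset α a b H₀ hH₀ z hz
    exact ⟨t, ⟨h1, h2⟩, hzt.symm⟩
  · rintro ⟨t, ⟨h1, h2⟩, rfl⟩
    exact weyl_mem α a b ha hb H₀ hH₀ t h1 h2
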